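/- Let R be an associative unital ring and A, B ∈ R. For m ≥ 2 let V_m^0 denote the set of vectors in V_m whose last entry is 0. Then Σ_{J∈V_m∖V_m^0} [B,A;J] = [X_{m−1}, A] = X_{m−1}·A − A·X_{m−1}, where X_{m−1} = Σ_{J∈V_{m−1}} [B,A;J]. -/

import Mathlib

/-- The (right) adjoint action: `ad_A X = [X, A] = X*A - A*X`. -/
def adRight {R : Type*} [Ring R] (A X : R) : R := X * A - A * X

/-- Multiple commutator `[B,A;J]` computed on the *reversed* list of indices:
`mcRev A B [] = 1`, and `mcRev A B (j :: rest) = ad_A^[j] (B * mcRev A B rest)`.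
This encodes: `[B,A;(j)] = ad_A^j B` and `[B,A;J∪j] = ad_A^j (B * [B,A;J])`. -/
def mcRev {R : Type*} [Ring R] (A B : R) : List ℕ → R
  | [] => 1
  | j :: rest => (adRight A)^[j] (B * mcRev A B rest)

/-- The multiple commutator `[B,A;J]` for `J = [j₁,…,j_r]` in the natural order. -/
def multiComm {R : Type*} [Ring R] (A B : R) (J : List ℕ) : R := mcRev A B J.reverse

/-- `V_m` : the (finite) set of nonempty vectors `J = (j₁,…,j_r)` of nonnegative
integers with `j₁+…+j_r + r = m`. -/
def Vm (m : ℕ) : Set (List ℕ) := {J | J ≠ [] ∧ J.sum + J.length = m}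

/-- `X_m = Σ_{J ∈ V_m} [B,A;J]`. -/
noncomputable def Xm {R : Type*} [Ring R] (A B : R) (m : ℕ) : R :=
  ∑ᶠ J ∈ Vm m, multiComm A B J

/-- `V_m^0` : the set of vectors in `V_m` whose last entry is `0`. -/
def Vm0 (m : ℕ) : Set (List ℕ) := {J | J ∈ Vm m ∧ J.getLast? = some 0}

/-- Increment the last entry of a list. -/
def incLast (J : List ℕ) : List ℕ := ((J.reverse.headI + 1) :: J.reverse.tail).reverse

lemma incLast_reverse (J : List ℕ) :
    (incLast J).reverse = (J.reverse.headI + 1) :: J.reverse.tail := by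
  simp [incLast]

lemma reverse_cons_of_ne_nil {J : List ℕ} (h : J ≠ []) :
    J.reverse = J.reverse.headI :: J.reverse.tail := by
  have : J.reverse ≠ [] := by simpa using h
  cases hr : J.reverse with
  | nil => exact absurd hr this
  | cons a t => simp

lemma Vm_finite (m : ℕ) : (Vm m).Finite := by
  have hfin : {l : List (Fin (m + 1)) | l.length ≤ m}.Finite :=
    List.finite_length_le (Fin (m + 1)) m
  apply Set.Finite.subset (hfin.image (List.map Fin.val))
  rintro J ⟨hne, hsum⟩
  have hlen : J.length ≤ m := by omega
  have hmem : ∀ x ∈ J, x ≤ m := by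
    intro x hx
    have := List.single_le_sum (fun y _ => Nat.zero_le y) x hx
    omega
  refine ⟨J.map (fun n => (⟨min n m, by omega⟩ : Fin (m + 1))), by simpa using hlen, ?_⟩
  rw [List.map_map]
  conv_rhs => rw [← List.map_id J]
  apply List.map_congr_left
  intro x hx
  simp [Nat.min_eq_left (hmem x hx)]

lemma multiComm_incLast {R : Type*} [Ring R] (A B : R) {J : List ℕ} (h : J ≠ []) :
    multiComm A B (incLast J) = multiComm A B J * A - A * multiComm A B J := by
  unfold multiComm
  rw [incLast_reverse J]
  conv_rhs => rw [reverse_cons_of_ne_nil h]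
  rw [mcRev, mcRev, Function.iterate_succ_apply']
  rfl

lemma incLast_injOn : Set.InjOn incLast {J : List ℕ | J ≠ []} := by
  intro J1 h1 J2 h2 heq
  have := congrArg List.reverse heq
  rw [incLast_reverse J1, incLast_reverse J2] at this
  obtain ⟨ha, hb⟩ := List.cons_eq_cons.mp this
  have : J1.reverse = J2.reverse := by
    have ha' : J1.reverse.headI = J2.reverse.headI := by omega
    rw [reverse_cons_of_ne_nil h1, reverse_cons_of_ne_nil h2, ha', hb]
  simpa using congrArg List.reverse this

lemma image_incLast (m : ℕ) (hm : 2 ≤ m) :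
    incLast '' Vm (m - 1) = Vm m \ Vm0 m := by
  ext K
  constructor
  · rintro ⟨J, ⟨hne, hsum⟩, rfl⟩
    have hrev := incLast_reverse J
    have hrlen : J.reverse.length ≠ 0 := by simpa using hne
    have hlen : (incLast J).length = J.length := by
      rw [incLast, List.length_reverse, List.length_cons, List.length_tail]
      have h2 : J.reverse.length = J.length := List.length_reverse
      omega
    have hs : (incLast J).sum = J.sum + 1 := by
      have h1 : (incLast J).sum = (J.reverse.headI + 1) + J.reverse.tail.sum := by
        rw [incLast, List.sum_reverse, List.sum_cons]
      have h2 : J.sum = J.reverse.headI + J.reverse.tail.sum := by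
        conv_lhs => rw [← List.sum_reverse J, reverse_cons_of_ne_nil hne]
        rw [List.sum_cons]
      omega
    have hKne : incLast J ≠ [] := by
      intro h
      rw [h] at hrev; simp at hrev
    refine ⟨⟨hKne, by omega⟩, ?_⟩
    intro ⟨_, hlast⟩
    rw [List.getLast?_eq_head?_reverse, hrev] at hlast
    simp at hlast
  · rintro ⟨⟨hne, hsum⟩, hnot⟩
    have hrne : K.reverse ≠ [] := by simpa using hne
    obtain ⟨j, t, hrt⟩ := List.exists_cons_of_ne_nil hrne
    have hj : j ≠ 0 := by
      intro h
      exact hnot ⟨⟨hne, hsum⟩, by rw [List.getLast?_eq_head?_reverse, hrt, h]; rfl⟩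
    obtain ⟨j', rfl⟩ := Nat.exists_eq_succ_of_ne_zero hj
    refine ⟨(j' :: t).reverse, ⟨by simp, ?_⟩, ?_⟩
    · have h1 : K.reverse.sum = K.sum := List.sum_reverse _
      have h2 : ((j' : ℕ) :: t).reverse.sum = j' + t.sum := by
        rw [List.sum_reverse]; simp
      have h3 : ((j' : ℕ) :: t).reverse.length = t.length + 1 := by simp
      have h4 : K.reverse.length = K.length := by simp
      rw [hrt] at h1 h4
      simp at h1 h4
      omega
    · unfold incLast
      rw [List.reverse_reverse]
      simp only [List.headI, List.tail]
      rw [← hrt, List.reverse_reverse]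

theorem sum_over_Vm_diff_Vm0 {R : Type*} [Ring R] (A B : R) :
    ∀ m : ℕ, 2 ≤ m →
      (∑ᶠ J ∈ Vm m \ Vm0 m, multiComm A B J) =
        Xm A B (m - 1) * A - A * Xm A B (m - 1) := by
  intro m hm
  rw [← image_incLast m hm]
  rw [finsum_mem_image (incLast_injOn.mono (fun J hJ => hJ.1))]
  have hfin := Vm_finite (m - 1)
  have hcoe : Vm (m - 1) = (hfin.toFinset : Set (List ℕ)) := by simp
  unfold Xm
  rw [hcoe, finsum_mem_coe_finset, finsum_mem_coe_finset,
    Finset.sum_mul, Finset.mul_sum, ← Finset.sum_sub_distrib]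
  apply Finset.sum_congr rfl
  intro J hJ
  have hJne : J ≠ [] := by
    have : J ∈ Vm (m - 1) := by rwa [Set.Finite.mem_toFinset] at hJ
    exact this.1
  exact multiComm_incLast A B hJne
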